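/- Let $f^{(2)}(x_1, x_2) = x_1 + x_2$ (a depth-2 polynomial) and $g^{(1)}(x_1) = x_1$ (a depth-1 polynomial). Then the depth-3 component of $\{f, g\}_{\mathrm{ari}}^\flat - \{f^\flat, g^\flat\}$ equals $2(x_1 - x_3) x_3$, and in particular is nonzero. -/

import Mathlib

set_option maxHeartbeats 2000000


open Finset

/-- A mould (sequence of "rational functions", modelled as arbitrary functions):
the depth-`r` component is a function of `r` variables `x₁, …, x_r`. -/
abbrev Mould (F : Type*) := (r : ℕ) → (Fin r → F) → F

/-- Extend a tuple `(x₁, …, x_r)` (0-indexed by `Fin r`) to all of `ℕ` using 1-based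
indexing, with the conventions `x₀ = 0` and `x_j = 0` for `j > r`. -/
def mext {F : Type*} [Zero F] {r : ℕ} (x : Fin r → F) (j : ℕ) : F :=
  if h : 1 ≤ j ∧ j ≤ r then x ⟨j - 1, by omega⟩ else 0

/-- The map `♯`: `(f^♯)^{(r)}(x₁,…,x_r) = f^{(r)}(x₁, x₁+x₂, …, x₁+⋯+x_r)`. -/
def sharp {F : Type*} [AddCommMonoid F] (f : Mould F) : Mould F :=
  fun r x => f r (fun i => ∑ j ∈ Finset.Iic i, x j)

/-- The map `♭`: `(f^♭)^{(r)}(x₁,…,x_r) = f^{(r)}(x₁, x₂-x₁, …, x_r-x_{r-1})`. -/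
def flat {F : Type*} [SubtractionMonoid F] (f : Mould F) : Mould F :=
  fun r x => f r (fun i => mext x ((i : ℕ) + 1) - mext x (i : ℕ))

variable {F : Type*} [Field F]

/-- The linearized Ihara action `f ∘ g` of moulds: the depth-`d` component is
`∑_{r+s=d} f^{(r)} ∘ g^{(s)}`, where
`(f^{(r)} ∘ g^{(s)})(x₁,…,x_{r+s}) = ∑_{i=0}^{s} f^{(r)}(x_{i+1}-x_i,…,x_{i+r}-x_i)
g^{(s)}(x₁,…,x_i,x_{i+r+1},…,x_{r+s}) + (-1)^r ∑_{i=1}^{s}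
f^{(r)}(x_{i+r}-x_{i+r-1},…,x_{i+r}-x_i) g^{(s)}(x₁,…,x_{i-1},x_{i+r},…,x_{r+s})`,
with the convention `x₀ = 0`. -/
def iharaAct (f g : Mould F) : Mould F := fun d x =>
  ∑ m ∈ Finset.range (d + 1),
    (let s := d - m
     let X := mext x
     (∑ i ∈ Finset.range (s + 1),
        f m (fun k => X (i + (k : ℕ) + 1) - X i) *
        g s (fun k => if (k : ℕ) + 1 ≤ i then X ((k : ℕ) + 1) else X ((k : ℕ) + 1 + m)))
     + (-1 : F) ^ m *
       ∑ i ∈ Finset.Icc 1 s,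
        f m (fun k => X (i + m) - X (i + m - ((k : ℕ) + 1))) *
        g s (fun k => if (k : ℕ) + 1 < i then X ((k : ℕ) + 1) else X ((k : ℕ) + 1 + m)))

/-- The Ihara bracket `{f, g} = f ∘ g - g ∘ f`. -/
def iharaBracket (f g : Mould F) : Mould F :=
  fun d x => iharaAct f g d x - iharaAct g f d x

/-- The preari action `f ∘_ari g` of moulds: the depth-`d` component is
`∑_{r+s=d} f^{(r)} ∘_ari g^{(s)}`, where `(f^{(r)} ∘_ari g^{(s)})(x₁,…,x_{r+s}) =
∑_{i=0}^{s} f^{(r)}(x_{i+1},…,x_{i+r}) g^{(s)}(x₁,…,x_i, x_{i+1}+⋯+x_{i+r+1},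
x_{i+r+2},…,x_{r+s}) - ∑_{i=1}^{s} f^{(r)}(x_{i+1},…,x_{i+r}) g^{(s)}(x₁,…,x_{i-1},
x_i+⋯+x_{i+r}, x_{i+r+1},…,x_{r+s})`. -/
def preariAct (f g : Mould F) : Mould F := fun d x =>
  ∑ m ∈ Finset.range (d + 1),
    (let s := d - m
     let X := mext x
     (∑ i ∈ Finset.range (s + 1),
        f m (fun k => X (i + (k : ℕ) + 1)) *
        g s (fun k =>
          if (k : ℕ) + 1 ≤ i then X ((k : ℕ) + 1)
          else if (k : ℕ) + 1 = i + 1 then ∑ j ∈ Finset.Icc (i + 1) (i + m + 1), X j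
          else X ((k : ℕ) + 1 + m)))
     - ∑ i ∈ Finset.Icc 1 s,
        f m (fun k => X (i + (k : ℕ) + 1)) *
        g s (fun k =>
          if (k : ℕ) + 1 < i then X ((k : ℕ) + 1)
          else if (k : ℕ) + 1 = i then ∑ j ∈ Finset.Icc i (i + m), X j
          else X ((k : ℕ) + 1 + m)))

/-- The ari bracket `{f, g}_ari = f ∘_ari g - g ∘_ari f`. -/
def ariBracket (f g : Mould F) : Mould F :=
  fun d x => preariAct f g d x - preariAct g f d x

/-- The anti-palindromic condition defining the subspace `𝒱`:
`f^{(r)}(x₁,…,x_r) + (-1)^r f^{(r)}(x_r,…,x₁) = 0` for all `r`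
(in depth `0` this forces `f^{(0)} = 0`). -/
def MemV (f : Mould F) : Prop :=
  ∀ (r : ℕ) (x : Fin r → F), f r x + (-1 : F) ^ r * f r (fun i => x i.rev) = 0

/-- The mould whose only nonzero component is the depth-2 polynomial `x₁ + x₂`. -/
def fEx : Mould ℚ
  | 2 => fun x => x 0 + x 1
  | _ => fun _ => 0

/-- The mould whose only nonzero component is the depth-1 polynomial `x₁`. -/
def gEx : Mould ℚ
  | 1 => fun x => x 0
  | _ => fun _ => 0

/-- For `f^{(2)}(x₁,x₂) = x₁ + x₂` and `g^{(1)}(x₁) = x₁`, the depth-3 component of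
`{f,g}_ari^♭ - {f^♭, g^♭}` equals `2(x₁ - x₃)x₃`; in particular it is nonzero. -/
theorem flat_bracket_counterexample :
    (∀ x : Fin 3 → ℚ,
      flat (ariBracket fEx gEx) 3 x - iharaBracket (flat fEx) (flat gEx) 3 x =
        2 * (x 0 - x 2) * x 2) ∧
    (∃ x : Fin 3 → ℚ,
      flat (ariBracket fEx gEx) 3 x - iharaBracket (flat fEx) (flat gEx) 3 x ≠ 0) := by
  have key : ∀ x : Fin 3 → ℚ,
      flat (ariBracket fEx gEx) 3 x - iharaBracket (flat fEx) (flat gEx) 3 x =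
        2 * (x 0 - x 2) * x 2 := by
    intro x
    simp only [flat, ariBracket, iharaBracket, preariAct, iharaAct, fEx, gEx, mext,
      Finset.sum_range_succ, Finset.sum_range_zero, Finset.sum_Icc_succ_top,
      Finset.Icc_self, Finset.sum_singleton, Fin.isValue]
    norm_num [Finset.sum_Icc_succ_top, Finset.Icc_self, Fin.sum_univ_succ]
    rw [show (⟨2, by omega⟩ : Fin 3) = 2 from rfl]
    ring
  exact ⟨key, ⟨![1, 0, 2], by rw [key]; change (2:ℚ) * (1 - 2) * 2 ≠ 0; norm_num⟩⟩
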